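/- The group with presentation ⟨x, y | xyx = yxy, (xy)^3 = 1, x^5 = 1⟩ is isomorphic to the alternating group A_5 on five letters; in particular it has order 60. -/

import Mathlib

set_option maxHeartbeats 1000000

namespace Stmt11

def x : FreeGroup (Fin 2) := FreeGroup.of 0
def y : FreeGroup (Fin 2) := FreeGroup.of 1

/-- Relators: `xyx = yxy`, `(xy)^3 = 1`, `x^5 = 1`. -/
def rels : Set (FreeGroup (Fin 2)) :=
  {x * y * x * (y * x * y)⁻¹,
   (x * y) ^ 3,
   x ^ 5}

/-- The quotient of the reduced braid group `B₃/(σ₁σ₂)³` by the normal closure of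
`σ₁^5`. -/
abbrev G := PresentedGroup rels

def X : G := PresentedGroup.of 0
def Y : G := PresentedGroup.of 1

lemma mk_rel {r : FreeGroup (Fin 2)} (h : r ∈ rels) : PresentedGroup.mk rels r = 1 :=
  (QuotientGroup.eq_one_iff r).2 (Subgroup.subset_normalClosure h)

lemma hbr : X * Y * X = Y * X * Y := by
  have := mk_rel (r := x * y * x * (y * x * y)⁻¹) (by simp [rels])
  simp only [map_mul, map_inv] at this
  exact mul_inv_eq_one.mp this

lemma h5 : X ^ 5 = 1 := by
  have := mk_rel (r := x ^ 5) (by simp [rels])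
  simp only [map_pow] at this
  exact this

lemma hxy3 : (X * Y) ^ 3 = 1 := by
  have := mk_rel (r := (x * y) ^ 3) (by simp [rels])
  simp only [map_pow, map_mul] at this
  exact this

lemma hy5 : Y ^ 5 = 1 := by
  have hc : (X * Y) * X * (X * Y)⁻¹ = Y := by
    have h' : (X*Y)*X = Y*(X*Y) := by
      calc (X*Y)*X = X*Y*X := by group
      _ = Y*X*Y := hbr
      _ = Y*(X*Y) := by group
    rw [h']; group
  calc Y ^ 5 = ((X*Y)*X*(X*Y)⁻¹)^5 := by rw [hc]
  _ = (X*Y)*X^5*(X*Y)⁻¹ := conj_pow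
  _ = 1 := by rw [h5]; group

lemma hx4 : X⁻¹ = X ^ 4 :=
  inv_eq_of_mul_eq_one_right (by rw [← pow_succ']; exact h5)

lemma hy4 : Y⁻¹ = Y ^ 4 :=
  inv_eq_of_mul_eq_one_right (by rw [← pow_succ']; exact hy5)

def W (l : List Bool) : G := (l.map (fun b => if b then Y else X)).prod

lemma W_nil : W [] = 1 := rfl
lemma W_cons (b : Bool) (l : List Bool) : W (b :: l) = (if b then Y else X) * W l := by
  simp [W]
lemma W_append (a b : List Bool) : W (a ++ b) = W a * W b := by
  simp [W]

lemma Wcongr (a b : List Bool) {u v : List Bool} (h : W u = W v) :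
    W (a ++ u ++ b) = W (a ++ v ++ b) := by
  rw [W_append (a++u) b, W_append (a++v) b, W_append a u, W_append a v, h]

lemma rot {c : Bool} {l : List Bool} (h : W (c :: l) = W []) : W (l ++ [c]) = W [] := by
  rw [W_cons, W_nil] at h
  rw [W_append, W_nil]
  rw [← inv_eq_of_mul_eq_one_right h, W_cons, W_nil, mul_one, inv_mul_cancel]

lemma wbr : W [false, true, false] = W [true, false, true] := by
  show X * (Y * (X * 1)) = Y * (X * (Y * 1))
  simpa [mul_assoc] using hbr

lemma wr1 : W [false, false, false, false, false] = W [] := by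
  show X * (X * (X * (X * (X * 1)))) = 1
  simpa [pow_succ, mul_assoc] using h5

lemma wr2 : W [true, true, true, true, true] = W [] := by
  show Y * (Y * (Y * (Y * (Y * 1)))) = 1
  simpa [pow_succ, mul_assoc] using hy5

lemma wr3 : W [false, true, false, true, false, true] = W [] := by
  show X * (Y * (X * (Y * (X * (Y * 1))))) = 1
  simpa [pow_succ, mul_assoc] using hxy3

lemma wr4 : W [true, false, true, false, true, false] = W [] := rot wr3

lemma hbb : (X*Y*X)*(X*Y*X) = 1 := by
  nth_rewrite 2 [hbr]
  simpa [pow_succ, mul_assoc] using hxy3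

lemma wr5 : W [false, true, false, false, true, false] = W [] := by
  show X * (Y * (X * (X * (Y * (X * 1))))) = 1
  simpa [mul_assoc] using hbb

lemma wr6 : W [true, false, false, true, false, false] = W [] := rot wr5
lemma wr7 : W [false, false, true, false, false, true] = W [] := rot wr6

lemma hbb2 : (Y*X*Y)*(Y*X*Y) = 1 := by
  nth_rewrite 1 [← hbr]
  simpa [pow_succ, mul_assoc] using hxy3

lemma wr8 : W [true, false, true, true, false, true] = W [] := by
  show Y * (X * (Y * (Y * (X * (Y * 1))))) = 1
  simpa [mul_assoc] using hbb2

lemma wr9 : W [false, true, true, false, true, true] = W [] := rot wr8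
lemma wr10 : W [true, true, false, true, true, false] = W [] := rot wr9

lemma W_repl (k : ℕ) (l : List Bool) : W (l ++ List.replicate k false) = W l * X ^ k := by
  induction k generalizing l with
  | zero => simp [W_append, W_nil]
  | succ n ih =>
    have e : l ++ List.replicate (n+1) false = (l ++ [false]) ++ List.replicate n false := by
      simp [List.replicate_succ]
    rw [e, ih, W_append, pow_succ']
    show W l * (X * 1) * X ^ n = W l * (X * X ^ n)
    group

def Tl : List (List Bool) := [[], [true], [false, true], [true, true], [false, false, true], [false, true, true], [false, false, false, true], [false, false, true, true], [false, false, false, false, true], [false, false, false, true, true], [true, false, false, false, false, true], [true, true, false, false, false, false, true]]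
def T (n : ℕ) : List Bool := Tl.getD n []



lemma sd0 : W (true :: []) = W [true] * X ^ 0 :=
  W_repl 0 [true]

lemma sd1 : W (false :: [true]) = W [false, true] * X ^ 0 :=
  W_repl 0 [false, true]

lemma sd2 : W (true :: [true]) = W [true, true] * X ^ 0 :=
  W_repl 0 [true, true]

lemma sd3 : W (false :: [false, true]) = W [false, false, true] * X ^ 0 :=
  W_repl 0 [false, false, true]

lemma sd4 : W (false :: [true, true]) = W [false, true, true] * X ^ 0 :=
  W_repl 0 [false, true, true]

lemma sd5 : W (false :: [false, false, true]) = W [false, false, false, true] * X ^ 0 :=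
  W_repl 0 [false, false, false, true]

lemma sd6 : W (false :: [false, true, true]) = W [false, false, true, true] * X ^ 0 :=
  W_repl 0 [false, false, true, true]

lemma sd7 : W (false :: [false, false, false, true]) = W [false, false, false, false, true] * X ^ 0 :=
  W_repl 0 [false, false, false, false, true]

lemma sd8 : W (false :: [false, false, true, true]) = W [false, false, false, true, true] * X ^ 0 :=
  W_repl 0 [false, false, false, true, true]

lemma sd9 : W (true :: [false, false, false, false, true]) = W [true, false, false, false, false, true] * X ^ 0 :=
  W_repl 0 [true, false, false, false, false, true]

lemma sd10 : W (true :: [true, false, false, false, false, true]) = W [true, true, false, false, false, false, true] * X ^ 0 :=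
  W_repl 0 [true, true, false, false, false, false, true]

lemma sn11 : W (false :: []) = W [] * X ^ 1 :=
  W_repl 1 []

lemma sn12 : W (true :: [false, true]) = W [false, true] * X ^ 1 := by
  have h :=
    calc W [true, false, true]
      _ = W [false, true, false] := Wcongr (u := [true, false, true]) (v := [false, true, false]) [] [] wbr.symm
  exact h.trans (W_repl 1 [false, true])

lemma sn13 : W (true :: [true, true]) = W [false, true, true] * X ^ 1 := by
  have h :=
    calc W [true, true, true]
      _ = W [true, true, true, true, true, false, true, true, false] := Wcongr (u := []) (v := [true, true, false, true, true, false]) [true, true, true] [] wr10.symm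
      _ = W [false, true, true, false] := Wcongr (u := [true, true, true, true, true]) (v := []) [] [false, true, true, false] wr2
  exact h.trans (W_repl 1 [false, true, true])

lemma sn14 : W (true :: [false, false, true]) = W [] * X ^ 3 := by
  have h :=
    calc W [true, false, false, true]
      _ = W [true, false, false, true, false, false, false, false, false] := Wcongr (u := []) (v := [false, false, false, false, false]) [true, false, false, true] [] wr1.symm
      _ = W [false, false, false] := Wcongr (u := [true, false, false, true, false, false]) (v := []) [] [false, false, false] wr6
  exact h.trans (W_repl 3 [])

lemma sn15 : W (true :: [false, true, true]) = W [false, false, true] * X ^ 1 := by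
  have h :=
    calc W [true, false, true, true]
      _ = W [false, true, false, true] := Wcongr (u := [true, false, true]) (v := [false, true, false]) [] [true] wbr.symm
      _ = W [false, false, true, false] := Wcongr (u := [true, false, true]) (v := [false, true, false]) [false] [] wbr.symm
  exact h.trans (W_repl 1 [false, false, true])

lemma sn16 : W (true :: [false, false, false, true]) = W [false, false, false, false, true] * X ^ 4 := by
  have h :=
    calc W [true, false, false, false, true]
      _ = W [false, false, false, false, false, true, false, false, false, true] := Wcongr (u := []) (v := [false, false, false, false, false]) [] [true, false, false, false, true] wr1.symm
      _ = W [false, false, false, false, false, true, false, false, false, true, false, false, false, false, false] := Wcongr (u := []) (v := [false, false, false, false, false]) [false, false, false, false, false, true, false, false, false, true] [] wr1.symm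
      _ = W [false, false, false, false, false, true, false, false, true, false, true, false, false, false, false] := Wcongr (u := [false, true, false]) (v := [true, false, true]) [false, false, false, false, false, true, false, false] [false, false, false, false] wbr
      _ = W [false, false, false, false, true, false, false, false, false] := Wcongr (u := [false, true, false, false, true, false]) (v := []) [false, false, false, false] [true, false, false, false, false] wr5
  exact h.trans (W_repl 4 [false, false, false, false, true])

lemma sn17 : W (true :: [false, false, true, true]) = W [false, false, false, true] * X ^ 0 := by
  have h :=
    calc W [true, false, false, true, true]
      _ = W [true, false, false, true, false, false, false, false, false, true] := Wcongr (u := []) (v := [false, false, false, false, false]) [true, false, false, true] [true] wr1.symm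
      _ = W [false, false, false, true] := Wcongr (u := [true, false, false, true, false, false]) (v := []) [] [false, false, false, true] wr6
  exact h.trans (W_repl 0 [false, false, false, true])

lemma sn18 : W (false :: [false, false, false, false, true]) = W [true] * X ^ 0 := by
  have h :=
    calc W [false, false, false, false, false, true]
      _ = W [true] := Wcongr (u := [false, false, false, false, false]) (v := []) [] [true] wr1
  exact h.trans (W_repl 0 [true])

lemma sn19 : W (false :: [false, false, false, true, true]) = W [true, false, false, false, false, true] * X ^ 1 := by
  have h :=
    calc W [false, false, false, false, true, true]
      _ = W [false, false, false, false, false, true, false, false, true, false, true, true] := Wcongr (u := []) (v := [false, true, false, false, true, false]) [false, false, false, false] [true, true] wr5.symm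
      _ = W [true, false, false, true, false, true, true] := Wcongr (u := [false, false, false, false, false]) (v := []) [] [true, false, false, true, false, true, true] wr1
      _ = W [true, false, false, false, true, false, true] := Wcongr (u := [true, false, true]) (v := [false, true, false]) [true, false, false] [true] wbr.symm
      _ = W [true, false, false, false, false, true, false] := Wcongr (u := [true, false, true]) (v := [false, true, false]) [true, false, false, false] [] wbr.symm
  exact h.trans (W_repl 1 [true, false, false, false, false, true])

lemma sn20 : W (true :: [false, false, false, true, true]) = W [false, false, false, true, true] * X ^ 4 := by
  have h :=
    calc W [true, false, false, false, true, true]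
      _ = W [true, false, false, false, true, true, false, false, false, false, false] := Wcongr (u := []) (v := [false, false, false, false, false]) [true, false, false, false, true, true] [] wr1.symm
      _ = W [true, false, false, false, true, true, false, true, true, true, true, true, false, false, false, false] := Wcongr (u := []) (v := [true, true, true, true, true]) [true, false, false, false, true, true, false] [false, false, false, false] wr2.symm
      _ = W [true, false, false, true, true, true, false, false, false, false] := Wcongr (u := [false, true, true, false, true, true]) (v := []) [true, false, false] [true, true, true, false, false, false, false] wr9
      _ = W [true, false, false, true, false, false, false, false, false, true, true, false, false, false, false] := Wcongr (u := []) (v := [false, false, false, false, false]) [true, false, false, true] [true, true, false, false, false, false] wr1.symm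
      _ = W [false, false, false, true, true, false, false, false, false] := Wcongr (u := [true, false, false, true, false, false]) (v := []) [] [false, false, false, true, true, false, false, false, false] wr6
  exact h.trans (W_repl 4 [false, false, false, true, true])

lemma sn21 : W (false :: [true, false, false, false, false, true]) = W [true, true] * X ^ 4 := by
  have h :=
    calc W [false, true, false, false, false, false, true]
      _ = W [true, false, true, false, false, false, true] := Wcongr (u := [false, true, false]) (v := [true, false, true]) [] [false, false, false, true] wbr
      _ = W [true, true, false, true, false, false, true] := Wcongr (u := [false, true, false]) (v := [true, false, true]) [true] [false, false, true] wbr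
      _ = W [true, true, false, true, false, false, true, false, false, false, false, false] := Wcongr (u := []) (v := [false, false, false, false, false]) [true, true, false, true, false, false, true] [] wr1.symm
      _ = W [true, true, false, false, false, false] := Wcongr (u := [false, true, false, false, true, false]) (v := []) [true, true] [false, false, false, false] wr5
  exact h.trans (W_repl 4 [true, true])

lemma sn22 : W (false :: [true, true, false, false, false, false, true]) = W [true, true, false, false, false, false, true] * X ^ 4 := by
  have h :=
    calc W [false, true, true, false, false, false, false, true, false]
      _ = W [false, true, true, false, false, false, true, false, true] := Wcongr (u := [false, true, false]) (v := [true, false, true]) [false, true, true, false, false, false] [] wbr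
      _ = W [true, true, true, true, true, false, true, true, false, false, false, true, false, true] := Wcongr (u := []) (v := [true, true, true, true, true]) [] [false, true, true, false, false, false, true, false, true] wr2.symm
      _ = W [true, true, true, false, false, true, false, true] := Wcongr (u := [true, true, false, true, true, false]) (v := []) [true, true, true] [false, false, true, false, true] wr10
      _ = W [true, true, false, false, false, false, false, true, false, false, true, false, true] := Wcongr (u := []) (v := [false, false, false, false, false]) [true, true] [true, false, false, true, false, true] wr1.symm
      _ = W [true, true, false, false, false, false, true] := Wcongr (u := [false, true, false, false, true, false]) (v := []) [true, true, false, false, false, false] [true] wr5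
  have h2 : W (false :: [true, true, false, false, false, false, true]) * X ^ 1 = W [true, true, false, false, false, false, true] := (W_repl 1 (false :: [true, true, false, false, false, false, true])).symm.trans h
  calc W (false :: [true, true, false, false, false, false, true]) = (W (false :: [true, true, false, false, false, false, true]) * X ^ 1) * X⁻¹ := by rw [pow_one]; group
    _ = W [true, true, false, false, false, false, true] * X⁻¹ := by rw [h2]
    _ = W [true, true, false, false, false, false, true] * X ^ 4 := by rw [hx4]

lemma sn23 : W (true :: [true, true, false, false, false, false, true]) = W [false, false, true, true] * X ^ 1 := by
  have h :=
    calc W [true, true, true, false, false, false, false, true]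
      _ = W [false, true, true, false, true, true, true, true, true, false, false, false, false, true] := Wcongr (u := []) (v := [false, true, true, false, true, true]) [] [true, true, true, false, false, false, false, true] wr9.symm
      _ = W [false, true, true, false, false, false, false, false, true] := Wcongr (u := [true, true, true, true, true]) (v := []) [false, true, true, false] [false, false, false, false, true] wr2
      _ = W [false, true, true, true] := Wcongr (u := [false, false, false, false, false]) (v := []) [false, true, true] [true] wr1
      _ = W [false, true, true, true, true, true, false, true, true, false] := Wcongr (u := []) (v := [true, true, false, true, true, false]) [false, true, true, true] [] wr10.symm
      _ = W [false, false, true, true, false] := Wcongr (u := [true, true, true, true, true]) (v := []) [false] [false, true, true, false] wr2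
  exact h.trans (W_repl 1 [false, false, true, true])

lemma stepX (i : ℕ) (hi : i < 12) :
    ∃ i' < 12, ∃ k < 5, W (false :: T i) = W (T i') * X ^ k := by
  interval_cases i
  · exact ⟨0, by norm_num, 1, by norm_num, sn11⟩
  · exact ⟨2, by norm_num, 0, by norm_num, sd1⟩
  · exact ⟨4, by norm_num, 0, by norm_num, sd3⟩
  · exact ⟨5, by norm_num, 0, by norm_num, sd4⟩
  · exact ⟨6, by norm_num, 0, by norm_num, sd5⟩
  · exact ⟨7, by norm_num, 0, by norm_num, sd6⟩
  · exact ⟨8, by norm_num, 0, by norm_num, sd7⟩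
  · exact ⟨9, by norm_num, 0, by norm_num, sd8⟩
  · exact ⟨1, by norm_num, 0, by norm_num, sn18⟩
  · exact ⟨10, by norm_num, 1, by norm_num, sn19⟩
  · exact ⟨3, by norm_num, 4, by norm_num, sn21⟩
  · exact ⟨11, by norm_num, 4, by norm_num, sn22⟩

lemma stepY (i : ℕ) (hi : i < 12) :
    ∃ i' < 12, ∃ k < 5, W (true :: T i) = W (T i') * X ^ k := by
  interval_cases i
  · exact ⟨1, by norm_num, 0, by norm_num, sd0⟩
  · exact ⟨3, by norm_num, 0, by norm_num, sd2⟩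
  · exact ⟨2, by norm_num, 1, by norm_num, sn12⟩
  · exact ⟨5, by norm_num, 1, by norm_num, sn13⟩
  · exact ⟨0, by norm_num, 3, by norm_num, sn14⟩
  · exact ⟨4, by norm_num, 1, by norm_num, sn15⟩
  · exact ⟨8, by norm_num, 4, by norm_num, sn16⟩
  · exact ⟨6, by norm_num, 0, by norm_num, sn17⟩
  · exact ⟨10, by norm_num, 0, by norm_num, sd9⟩
  · exact ⟨9, by norm_num, 4, by norm_num, sn20⟩
  · exact ⟨11, by norm_num, 0, by norm_num, sd10⟩
  · exact ⟨7, by norm_num, 1, by norm_num, sn23⟩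

def ff : Fin 12 × Fin 5 → G := fun p => W (T p.1.val) * X ^ (p.2.val : ℕ)

lemma mulX (p : Fin 12 × Fin 5) : ∃ q, ff q = X * ff p := by
  obtain ⟨i, j⟩ := p
  obtain ⟨i', hi', k, hk, h⟩ := stepX i.val i.isLt
  refine ⟨(⟨i', hi'⟩, ⟨(k + j.val) % 5, Nat.mod_lt _ (by norm_num)⟩), ?_⟩
  show W (T i') * X ^ ((k + j.val) % 5) = X * (W (T i.val) * X ^ j.val)
  have e1 : X * (W (T i.val) * X ^ j.val) = W (T i') * X ^ (k + j.val) := by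
    rw [← mul_assoc]
    have e2 : X * W (T i.val) = W (false :: T i.val) := by simp [W_cons]
    rw [e2, h, mul_assoc, ← pow_add]
  rw [e1, ← pow_eq_pow_mod (k + j.val) h5]

lemma mulY (p : Fin 12 × Fin 5) : ∃ q, ff q = Y * ff p := by
  obtain ⟨i, j⟩ := p
  obtain ⟨i', hi', k, hk, h⟩ := stepY i.val i.isLt
  refine ⟨(⟨i', hi'⟩, ⟨(k + j.val) % 5, Nat.mod_lt _ (by norm_num)⟩), ?_⟩
  show W (T i') * X ^ ((k + j.val) % 5) = Y * (W (T i.val) * X ^ j.val)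
  have e1 : Y * (W (T i.val) * X ^ j.val) = W (T i') * X ^ (k + j.val) := by
    rw [← mul_assoc]
    have e2 : Y * W (T i.val) = W (true :: T i.val) := by simp [W_cons]
    rw [e2, h, mul_assoc, ← pow_add]
  rw [e1, ← pow_eq_pow_mod (k + j.val) h5]

lemma t1 : X ∈ Submonoid.closure ({X, Y} : Set G) :=
  Submonoid.subset_closure (Set.mem_insert X {Y})
lemma t2 : X⁻¹ ∈ Submonoid.closure ({X, Y} : Set G) := by
  rw [hx4]; exact pow_mem t1 4
lemma t3 : Y ∈ Submonoid.closure ({X, Y} : Set G) :=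
  Submonoid.subset_closure (Set.mem_insert_of_mem X rfl)
lemma t4 : Y⁻¹ ∈ Submonoid.closure ({X, Y} : Set G) := by
  rw [hy4]; exact pow_mem t3 4

lemma ff_surjective : Function.Surjective ff := by
  have hM : ∀ h ∈ Submonoid.closure ({X, Y} : Set G), ∀ p, ∃ q, ff q = h * ff p := by
    intro h hh
    induction hh using Submonoid.closure_induction with
    | mem z hz =>
      rcases hz with rfl | rfl
      · exact mulX
      · exact mulY
    | one => exact fun p => ⟨p, by rw [one_mul]⟩
    | mul a b _ _ iha ihb =>
      intro p
      obtain ⟨q1, hq1⟩ := ihb p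
      obtain ⟨q2, hq2⟩ := iha q1
      exact ⟨q2, by rw [hq2, hq1, mul_assoc]⟩
  have hG : ∀ g : G, g ∈ Submonoid.closure ({X, Y} : Set G) := by
    intro g
    have hrange : Set.range (PresentedGroup.of : Fin 2 → G) = {X, Y} := by
      ext g
      constructor
      · rintro ⟨i, rfl⟩
        fin_cases i
        · exact Or.inl rfl
        · exact Or.inr rfl
      · rintro (rfl | rfl)
        · exact ⟨0, rfl⟩
        · exact ⟨1, rfl⟩
    have htop : Subgroup.closure ({X, Y} : Set G) = ⊤ := by
      rw [← hrange]; exact PresentedGroup.closure_range_of rels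
    have hg : g ∈ Subgroup.closure ({X, Y} : Set G) := htop ▸ Subgroup.mem_top g
    have key : g ∈ Submonoid.closure ({X, Y} : Set G) ∧
        g⁻¹ ∈ Submonoid.closure ({X, Y} : Set G) := by
      refine Subgroup.closure_induction
        (p := fun g _ => g ∈ Submonoid.closure ({X, Y} : Set G) ∧
          g⁻¹ ∈ Submonoid.closure ({X, Y} : Set G)) ?_ ?_ ?_ ?_ hg
      · rintro z (rfl | rfl)
        · exact ⟨t1, t2⟩
        · exact ⟨t3, t4⟩
      · exact ⟨one_mem _, by rw [inv_one]; exact one_mem _⟩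
      · rintro a b _ _ ⟨ha1, ha2⟩ ⟨hb1, hb2⟩
        exact ⟨mul_mem ha1 hb1, by rw [mul_inv_rev]; exact mul_mem hb2 ha2⟩
      · rintro a _ ⟨ha1, ha2⟩
        exact ⟨ha2, by rw [inv_inv]; exact ha1⟩
    exact key.1
  intro g
  have hff1 : ff (⟨0, by norm_num⟩, ⟨0, by norm_num⟩) = 1 := by
    show W (T 0) * X ^ 0 = 1
    rw [pow_zero, mul_one]; rfl
  obtain ⟨q, hq⟩ := hM g (hG g) (⟨0, by norm_num⟩, ⟨0, by norm_num⟩)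
  exact ⟨q, by rw [hq, hff1, mul_one]⟩

instance : Finite G := Finite.of_surjective ff ff_surjective

lemma cardG_le : Nat.card G ≤ 60 := by
  calc Nat.card G ≤ Nat.card (Fin 12 × Fin 5) := Nat.card_le_card_of_surjective ff ff_surjective
  _ = 60 := by simp

/-! ### The homomorphism to `A₅` -/

open Equiv

def p : Perm (Fin 5) := ⟨![1,2,3,4,0], ![4,0,1,2,3], by decide, by decide⟩
def q : Perm (Fin 5) := ⟨![2,0,4,1,3], ![1,3,0,4,2], by decide, by decide⟩

def x₀ : alternatingGroup (Fin 5) := ⟨p, by rw [Equiv.Perm.mem_alternatingGroup]; decide⟩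
def y₀ : alternatingGroup (Fin 5) := ⟨q, by rw [Equiv.Perm.mem_alternatingGroup]; decide⟩

def fgen : Fin 2 → alternatingGroup (Fin 5) := ![x₀, y₀]

lemma hfgen : ∀ r ∈ rels, FreeGroup.lift fgen r = 1 := by
  intro r hr
  rcases hr with rfl | rfl | rfl
  · simp only [x, y, map_mul, map_inv, FreeGroup.lift_apply_of]
    show fgen 0 * fgen 1 * fgen 0 * (fgen 1 * fgen 0 * fgen 1)⁻¹ = 1
    decide
  · simp only [x, y, map_mul, map_pow, FreeGroup.lift_apply_of]
    show (fgen 0 * fgen 1) ^ 3 = 1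
    decide
  · simp only [x, map_pow, FreeGroup.lift_apply_of]
    show (fgen 0) ^ 5 = 1
    decide

def φ : G →* alternatingGroup (Fin 5) := PresentedGroup.toGroup hfgen

instance : Fact (Nat.Prime 2) := ⟨by norm_num⟩
instance : Fact (Nat.Prime 3) := ⟨by norm_num⟩
instance : Fact (Nat.Prime 5) := ⟨by norm_num⟩

lemma cardA5 : Nat.card (alternatingGroup (Fin 5)) = 60 := by
  rw [Nat.card_eq_fintype_card]
  have h := @two_mul_card_alternatingGroup (Fin 5) _ _ _
  rw [Fintype.card_perm, Fintype.card_fin] at h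
  have h2 : (5 : ℕ).factorial = 120 := by decide
  rw [h2] at h
  omega

lemma phi_surjective : Function.Surjective φ := by
  rw [← MonoidHom.range_eq_top]
  set H := φ.range with hH
  have hx : x₀ ∈ H := ⟨X, by simp [φ, X, PresentedGroup.toGroup.of, fgen]⟩
  have hy : y₀ ∈ H := ⟨Y, by simp [φ, Y, PresentedGroup.toGroup.of, fgen]⟩
  have h5' : (5 : ℕ) ∣ Nat.card H := by
    have h : orderOf x₀ = 5 := orderOf_eq_prime (by decide) (by decide)
    have hd := Subgroup.orderOf_dvd_natCard H hx
    rwa [h] at hd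
  have h3' : (3 : ℕ) ∣ Nat.card H := by
    have h : orderOf (x₀ * y₀) = 3 := orderOf_eq_prime (by decide) (by decide)
    have hd := Subgroup.orderOf_dvd_natCard H (mul_mem hx hy)
    rwa [h] at hd
  have h2' : (2 : ℕ) ∣ Nat.card H := by
    have h : orderOf (x₀ * y₀ * x₀) = 2 := orderOf_eq_prime (by decide) (by decide)
    have hd := Subgroup.orderOf_dvd_natCard H (mul_mem (mul_mem hx hy) hx)
    rwa [h] at hd
  have hdvd : Nat.card H ∣ 60 := cardA5 ▸ Subgroup.card_subgroup_dvd_card H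
  have h30 : (30 : ℕ) ∣ Nat.card H := Nat.Coprime.mul_dvd_of_dvd_of_dvd (by norm_num)
    (Nat.Coprime.mul_dvd_of_dvd_of_dvd (by norm_num) h2' h3') h5'
  have hpos : 0 < Nat.card H := Nat.card_pos
  have hle : Nat.card H ≤ 60 := Nat.le_of_dvd (by norm_num) hdvd
  have hcases : Nat.card H = 30 ∨ Nat.card H = 60 := by
    obtain ⟨c, hc⟩ := h30
    have hc2 : c ≤ 2 := by omega
    interval_cases c <;> omega
  rcases hcases with h30' | h60
  · exfalso
    have hidx : H.index = 2 := by
      have hmi := Subgroup.card_mul_index H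
      rw [h30', cardA5] at hmi
      omega
    have hnormal : H.Normal := by
      constructor
      intro a ha g
      have key : g * (a * g⁻¹) ∈ H := by
        rw [Subgroup.mul_mem_iff_of_index_two hidx,
          Subgroup.mul_mem_iff_of_index_two hidx]
        simp [ha, Subgroup.inv_mem_iff]
      rwa [← mul_assoc] at key
    rcases hnormal.eq_bot_or_eq_top with hbot | htop
    · rw [hbot] at h30'
      simp at h30'
    · rw [htop] at h30'
      rw [Subgroup.card_top, cardA5] at h30'
      omega
  · exact Subgroup.eq_top_of_card_eq H (by rw [h60, cardA5])

lemma cardG : Nat.card G = 60 := by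
  have h1 : 60 ≤ Nat.card G := by
    calc (60 : ℕ) = Nat.card (alternatingGroup (Fin 5)) := cardA5.symm
    _ ≤ Nat.card G := Nat.card_le_card_of_surjective φ phi_surjective
  exact le_antisymm cardG_le h1

lemma phi_bijective : Function.Bijective φ :=
  (Nat.bijective_iff_surjective_and_card φ).mpr ⟨phi_surjective, by rw [cardG, cardA5]⟩

/-- `G` is isomorphic to the alternating group `A₅` on five letters;
in particular it has order `60`. -/
theorem iso_alternating :
    Nonempty (G ≃* alternatingGroup (Fin 5)) ∧ Nat.card G = 60 := by
  exact ⟨⟨MulEquiv.ofBijective φ phi_bijective⟩, cardG⟩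

end Stmt11
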